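/- Let (f_n) be a sequence of functions on ℂ² that are holomorphic in the first variable and anti-holomorphic in the second, converging to 0 uniformly on compact subsets of (ℂ∖{0})². Then f_n → 0 uniformly on compact subsets of ℂ². -/
import Mathlib


open Filter

lemma max_mod_step {f : ℂ → ℂ} (hf : Differentiable ℂ f) {R ε : ℝ} (hR : 0 < R)
    (hb : ∀ u, ‖u‖ = R → ‖f u‖ ≤ ε) : ∀ z, ‖z‖ ≤ R → ‖f z‖ ≤ ε := by
  intro z hz
  have := Complex.norm_le_of_forall_mem_frontier_norm_le (U := Metric.ball (0 : ℂ) R)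
    Metric.isBounded_ball hf.diffContOnCl (C := ε) ?_ (z := z) ?_
  · exact this
  · intro u hu
    rw [frontier_ball _ hR.ne'] at hu
    exact hb u (by simpa [mem_sphere_iff_norm] using hu)
  · rw [closure_ball _ hR.ne']
    simpa [Metric.mem_closedBall, dist_zero_right] using hz

/-- If `(f_n)` is a sequence of functions on `ℂ²`, holomorphic in the first
variable and anti-holomorphic in the second, converging to `0` uniformly on
compact subsets of `(ℂ∖{0})²`, then `f_n → 0` uniformly on compact subsets
of `ℂ²`. -/
theorem hermitian_entire_convergence (f : ℕ → ℂ → ℂ → ℂ)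
    (hol₁ : ∀ n w, Differentiable ℂ fun z => f n z w)
    (hol₂ : ∀ n z, Differentiable ℂ fun w => f n z ((starRingEnd ℂ) w))
    (hconv : ∀ K : Set (ℂ × ℂ), IsCompact K →
      K ⊆ {p : ℂ × ℂ | p.1 ≠ 0 ∧ p.2 ≠ 0} →
      TendstoUniformlyOn (fun n p => f n p.1 p.2) 0 atTop K) :
    ∀ K : Set (ℂ × ℂ), IsCompact K →
      TendstoUniformlyOn (fun n p => f n p.1 p.2) 0 atTop K := by
  intro K hK
  obtain ⟨r, hr⟩ := hK.isBounded.subset_closedBall (0 : ℂ × ℂ)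
  set R : ℝ := max r 0 + 1 with hRdef
  have hR : 0 < R := by positivity
  have hKR : ∀ p ∈ K, ‖p.1‖ ≤ R ∧ ‖p.2‖ ≤ R := by
    intro p hp
    have := hr hp
    rw [Metric.mem_closedBall, dist_zero_right, Prod.norm_def] at this
    constructor
    · calc ‖p.1‖ ≤ r := le_trans (le_max_left _ _) this
        _ ≤ R := by simp [hRdef]; linarith [le_max_left r 0]
    · calc ‖p.2‖ ≤ r := le_trans (le_max_right _ _) this
        _ ≤ R := by simp [hRdef]; linarith [le_max_left r 0]
  -- torus
  set T : Set (ℂ × ℂ) := Metric.sphere (0:ℂ) R ×ˢ Metric.sphere (0:ℂ) R with hTdef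
  have hTc : IsCompact T := (isCompact_sphere _ _).prod (isCompact_sphere _ _)
  have hTsub : T ⊆ {p : ℂ × ℂ | p.1 ≠ 0 ∧ p.2 ≠ 0} := by
    rintro ⟨u, v⟩ ⟨hu, hv⟩
    rw [mem_sphere_iff_norm, sub_zero] at hu hv
    exact ⟨by intro h; rw [h] at hu; simp at hu; linarith,
      by intro h; rw [h] at hv; simp at hv; linarith⟩
  have hT := hconv T hTc hTsub
  rw [Metric.tendstoUniformlyOn_iff] at hT ⊢
  intro ε hε
  filter_upwards [hT (ε/2) (by linarith)] with n hn
  -- torus bound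
  have hbT : ∀ u v : ℂ, ‖u‖ = R → ‖v‖ = R → ‖f n u v‖ ≤ ε / 2 := by
    intro u v hu hv
    have := hn (u, v) ⟨by simpa [mem_sphere_iff_norm], by simpa [mem_sphere_iff_norm]⟩
    simpa [dist_eq_norm] using this.le
  -- step 1 : bound for ‖z‖ ≤ R, ‖v‖ = R
  have step1 : ∀ z v : ℂ, ‖z‖ ≤ R → ‖v‖ = R → ‖f n z v‖ ≤ ε / 2 := by
    intro z v hz hv
    exact max_mod_step (hol₁ n v) hR (fun u hu => hbT u v hu hv) z hz
  -- step 2 : bound on the bidisc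
  have step2 : ∀ z w : ℂ, ‖z‖ ≤ R → ‖w‖ ≤ R → ‖f n z w‖ ≤ ε / 2 := by
    intro z w hz hw
    have := max_mod_step (hol₂ n z) hR
      (fun v hv => step1 z ((starRingEnd ℂ) v) hz (by simpa using hv))
      ((starRingEnd ℂ) w) (by simpa using hw)
    simpa using this
  intro p hp
  obtain ⟨h1, h2⟩ := hKR p hp
  have := step2 p.1 p.2 h1 h2
  simp only [Pi.zero_apply, dist_zero_left]
  calc ‖f n p.1 p.2‖ ≤ ε / 2 := this
    _ < ε := by linarith
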